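/- With the hypotheses of the main theorem on the Kummer curve Weierstrass semigroup, the set H = ⟨m,λ₀⟩ ∪ ⋃_{k=r}^{λ₀-1} B_k with B_k = {mk - k'λ₀ : 1 ≤ k' ≤ η_k} is a disjoint union, and its complement in ℕ₀ has cardinality ((m-1)(r-1) + r - ∑_{i=1}^r gcd(m,λ_i))/2. -/

import Mathlib

set_option linter.unusedSectionVars false
set_option linter.unusedVariables false
set_option maxHeartbeats 1000000

open Finset

/-- min over i < r of ⌊s i * m / lam i⌋ -/
noncomputable def kinf (m r : ℕ) (lam : ℕ → ℕ) (s : ℕ → ℕ) : ℕ :=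
  sInf {w : ℕ | ∃ i, i < r ∧ w = s i * m / lam i}

/-- η_k = max over tuples (s_1,…,s_r) with 1 ≤ s_i ≤ λ_i and ∑ s_i = k of min_i ⌊s_i m/λ_i⌋ -/
noncomputable def eta (m r : ℕ) (lam : ℕ → ℕ) (k : ℕ) : ℕ :=
  sSup {v : ℕ | ∃ s : ℕ → ℕ, (∀ i, i < r → 1 ≤ s i ∧ s i ≤ lam i) ∧
      (∑ i ∈ Finset.range r, s i) = k ∧ v = kinf m r lam s}

/-- extended η: 0 for k < r, η_k for r ≤ k < λ₀, m-1 for k ≥ λ₀ -/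
noncomputable def etaExt (m r lam0 : ℕ) (lam : ℕ → ℕ) (k : ℕ) : ℕ :=
  if k < r then 0 else if k < lam0 then eta m r lam k else m - 1

/-- ε_k = m k - λ₀ (η_k + 1) -/
noncomputable def eps (m r lam0 : ℕ) (lam : ℕ → ℕ) (k : ℕ) : ℤ :=
  (m : ℤ) * k - (lam0 : ℤ) * (etaExt m r lam0 lam k + 1)

def IsNumericalSemigroup (H : Set ℕ) : Prop :=
  0 ∈ H ∧ (∀ a ∈ H, ∀ b ∈ H, a + b ∈ H) ∧ {x : ℕ | x ∉ H}.Finite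

/-! ### Auxiliary material -/

/-- truncated η: 0 for k < r, η_k otherwise -/
noncomputable def etaP (m r : ℕ) (lam : ℕ → ℕ) (k : ℕ) : ℕ :=
  if k < r then 0 else eta m r lam k

/-- the Finset of gaps of H -/
noncomputable def gapF (m r lam0 : ℕ) (lam : ℕ → ℕ) : Finset ℕ :=
  ((Finset.Icc 1 (lam0-1)).sigma
      (fun k => Finset.Icc (etaP m r lam k + 1) (m*k/lam0))).image
    (fun p => m * p.1 - p.2 * lam0)

/-- ceiling sums -/
def NN (m r : ℕ) (lam : ℕ → ℕ) (t : ℕ) : ℕ := ∑ i ∈ range r, (t * lam i + m - 1) / m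

lemma exists_tuple (r : ℕ) (g h : ℕ → ℕ) (hg : ∀ i, i < r → g i ≤ h i) :
    ∀ k, ∑ i ∈ range r, g i ≤ k → k ≤ ∑ i ∈ range r, h i →
    ∃ s : ℕ → ℕ, (∀ i, i < r → g i ≤ s i ∧ s i ≤ h i) ∧ ∑ i ∈ range r, s i = k := by
  intro k
  induction k with
  | zero => intro h1 _; exact ⟨g, fun i hi => ⟨le_refl _, hg i hi⟩, Nat.le_zero.mp h1⟩
  | succ n ih =>
    intro h1 h2
    rcases Nat.lt_or_ge n (∑ i ∈ range r, g i) with hlt | hge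
    · have : ∑ i ∈ range r, g i = n + 1 := le_antisymm h1 hlt
      exact ⟨g, fun i hi => ⟨le_refl _, hg i hi⟩, this⟩
    · obtain ⟨s, hs1, hs2⟩ := ih hge (le_trans (Nat.le_succ n) h2)
      have hlt : ∑ i ∈ range r, s i < ∑ i ∈ range r, h i := by
        rw [hs2]; exact lt_of_lt_of_le (Nat.lt_succ_self n) h2
      obtain ⟨i, hi, hsi⟩ := Finset.exists_lt_of_sum_lt hlt
      refine ⟨Function.update s i (s i + 1), ?_, ?_⟩
      · intro j hj
        rcases eq_or_ne j i with rfl | hne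
        · rw [Function.update_self]
          exact ⟨le_trans (hs1 j hj).1 (Nat.le_succ _), hsi⟩
        · rw [Function.update_of_ne hne]; exact hs1 j hj
      · rw [Finset.sum_update_of_mem hi, ← hs2,
          ← Finset.sum_erase_add (range r) s hi, Finset.erase_eq]
        ring

lemma ceil_pair (m L a b : ℕ) (hm : 0 < m) (hab : a + b = m * L) (ha : 0 < a) (hb : 0 < b) :
    (a + m - 1) / m + (b + m - 1) / m = L + (if m ∣ a then 0 else 1) := by
  by_cases hd : m ∣ a
  · obtain ⟨q, rfl⟩ := hd
    rw [if_pos ⟨q, rfl⟩]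
    have hqL : q < L := by
      by_contra h
      push_neg at h
      have := Nat.mul_le_mul_left m h
      omega
    have hb' : m * q + m * (L - q) = m * L := by
      rw [← Nat.mul_add]; congr 1; omega
    have hbe : b = m * (L - q) := by omega
    have e1 : m * q + m - 1 = (m - 1) + q * m := by rw [mul_comm q m]; omega
    have e2 : b + m - 1 = (m - 1) + (L - q) * m := by rw [mul_comm (L-q) m]; omega
    rw [e1, e2, Nat.add_mul_div_right _ _ hm, Nat.add_mul_div_right _ _ hm,
      Nat.div_eq_of_lt (by omega)]
    omega
  · rw [if_neg hd]
    set q := a / m with hq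
    set s := a % m with hs
    have h1 : m * q + s = a := Nat.div_add_mod a m
    have hs1 : 1 ≤ s := by
      rcases Nat.eq_zero_or_pos s with h | h
      · exact absurd (Nat.dvd_of_mod_eq_zero (by omega)) hd
      · exact h
    have hs2 : s < m := Nat.mod_lt a hm
    clear_value q s
    clear hq hs
    have hqL : q + 1 ≤ L := by
      by_contra h
      push_neg at h
      have : L ≤ q := by omega
      have := Nat.mul_le_mul_left m this
      omega
    have e1 : a + m - 1 = (s + m - 1) + q * m := by rw [mul_comm q m]; omega
    have e2 : s + m - 1 = (s - 1) + 1 * m := by omega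
    have key : (L - q - 1) * m + (q + 1) * m = L * m := by
      rw [← Nat.add_mul]; congr 1; omega
    have e3 : (q + 1) * m = q * m + m := by ring
    have e4 : m * L = L * m := mul_comm _ _
    have e5 : m * q = q * m := mul_comm _ _
    have e6 : b + m - 1 = (m - s + m - 1) + (L - q - 1) * m := by omega
    have e7 : m - s + m - 1 = (m - s - 1) + 1 * m := by omega
    rw [e1, Nat.add_mul_div_right _ _ hm, e2, Nat.add_mul_div_right _ _ hm,
      Nat.div_eq_of_lt (by omega : s - 1 < m), e6, Nat.add_mul_div_right _ _ hm, e7,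
      Nat.add_mul_div_right _ _ hm, Nat.div_eq_of_lt (by omega : m - s - 1 < m)]
    omega

lemma floor_pair (m L a b : ℕ) (hL : 0 < L) (hab : a + b = L * m) (hnd : ¬ L ∣ a) :
    a / L + b / L = m - 1 := by
  set q := a / L with hq
  set s := a % L with hs
  have h1 : L * q + s = a := Nat.div_add_mod a L
  have hs1 : 1 ≤ s := by
    rcases Nat.eq_zero_or_pos s with h | h
    · exact absurd (Nat.dvd_of_mod_eq_zero (by omega)) hnd
    · exact h
  have hs2 : s < L := Nat.mod_lt a hL
  clear_value q s
  clear hq hs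
  have hqm : q + 1 ≤ m := by
    by_contra h
    push_neg at h
    have : m ≤ q := by omega
    have := Nat.mul_le_mul_left L this
    omega
  have key : (m - q - 1) * L + (q + 1) * L = m * L := by
    rw [← Nat.add_mul]; congr 1; omega
  have e3 : (q + 1) * L = q * L + L := by ring
  have e4 : L * m = m * L := mul_comm _ _
  have e5 : L * q = q * L := mul_comm _ _
  have e6 : b = (L - s) + (m - q - 1) * L := by omega
  rw [e6, Nat.add_mul_div_right _ _ hL, Nat.div_eq_of_lt (by omega : L - s < L)]
  omega

lemma sum_reflect (n : ℕ) (f : ℕ → ℕ) :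
    ∑ t ∈ Icc 1 (n-1), f t = ∑ t ∈ Icc 1 (n-1), f (n - t) := by
  refine Finset.sum_nbij' (fun t => n - t) (fun t => n - t) ?_ ?_ ?_ ?_ ?_ <;>
      simp only [Finset.mem_Icc]
  · intros; omega
  · intros; omega
  · intros; omega
  · intros; omega
  · intro a ha
    congr 1
    omega

lemma count_dvd (m lam : ℕ) (hm : 0 < m) (hl : 0 < lam) :
    ((Icc 1 (m-1)).filter (fun t => m ∣ t * lam)).card = Nat.gcd m lam - 1 := by
  set d := Nat.gcd m lam with hd
  have hdpos : 0 < d := Nat.gcd_pos_of_pos_left lam hm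
  have hdm : d ∣ m := Nat.gcd_dvd_left m lam
  have hdl : d ∣ lam := Nat.gcd_dvd_right m lam
  obtain ⟨m', hm'⟩ := hdm
  obtain ⟨l', hl'⟩ := hdl
  have hm'pos : 0 < m' := by
    rcases Nat.eq_zero_or_pos m' with h | h
    · subst h; omega
    · exact h
  have hcop : Nat.Coprime m' l' := by
    have h := Nat.coprime_div_gcd_div_gcd (m := m) (n := lam) (hd ▸ hdpos)
    rw [← hd] at h
    have e1 : m / d = m' := by rw [hm', Nat.mul_div_cancel_left _ hdpos]
    have e2 : lam / d = l' := by rw [hl', Nat.mul_div_cancel_left _ hdpos]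
    rwa [e1, e2] at h
  have hiff : ∀ t, m ∣ t * lam ↔ m' ∣ t := by
    intro t
    rw [hm', hl']
    constructor
    · intro h
      have h2 : d * m' ∣ d * (t * l') := by
        rw [show d * (t * l') = t * (d * l') by ring] at *
        exact h
      have h3 : m' ∣ t * l' := (mul_dvd_mul_iff_left (by omega : d ≠ 0)).mp h2
      exact (Nat.Coprime.dvd_of_dvd_mul_right hcop h3)
    · rintro ⟨j, rfl⟩
      exact ⟨j * l', by ring⟩
  have himg : (Icc 1 (m-1)).filter (fun t => m ∣ t * lam) = (Icc 1 (d-1)).image (· * m') := by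
    ext t
    simp only [Finset.mem_filter, Finset.mem_Icc, Finset.mem_image]
    constructor
    · rintro ⟨⟨h1, h2⟩, h3⟩
      obtain ⟨j, rfl⟩ := (hiff _).mp h3
      have hmd : m' * d = m := by rw [hm']; ring
      refine ⟨j, ⟨?_, ?_⟩, mul_comm j m'⟩
      · rcases Nat.eq_zero_or_pos j with h | h
        · subst h; simp at h1
        · exact h
      · by_contra h
        push_neg at h
        have hdj : d ≤ j := by omega
        have := Nat.mul_le_mul_left m' hdj
        omega
    · rintro ⟨j, ⟨h1, h2⟩, rfl⟩
      have hmd : m' * d = m := by rw [hm']; ring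
      have hjm : m' * j ≤ m' * (d-1) := Nat.mul_le_mul_left m' h2
      have hsub : m' * (d-1) + m' = m' * d := by
        rw [← Nat.mul_succ]; congr 1; omega
      have hjm' : j * m' = m' * j := mul_comm _ _
      refine ⟨⟨Nat.mul_pos h1 hm'pos, by omega⟩, (hiff _).mpr ⟨j, mul_comm _ _⟩⟩
  rw [himg, Finset.card_image_of_injective _ (fun a b h => by
    exact Nat.eq_of_mul_eq_mul_right hm'pos h), Nat.card_Icc]
  omega

lemma ceil_sum (m lam : ℕ) (hm : 2 ≤ m) (hl : 1 ≤ lam) :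
    2 * (∑ t ∈ Icc 1 (m-1), (t * lam + m - 1) / m) + (Nat.gcd m lam - 1)
      = (m-1) * (lam+1) := by
  have hgcd : Nat.gcd m lam - 1 ≤ m - 1 := by
    have := Nat.le_of_dvd (by omega : 0 < m) (Nat.gcd_dvd_left m lam)
    omega
  have h2 : 2 * (∑ t ∈ Icc 1 (m-1), (t * lam + m - 1) / m)
      = ∑ t ∈ Icc 1 (m-1), ((t * lam + m - 1) / m + ((m - t) * lam + m - 1) / m) := by
    rw [Finset.sum_add_distrib, two_mul]
    congr 1
    exact sum_reflect m (fun t => (t * lam + m - 1) / m)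
  rw [h2]
  have h3 : ∀ t ∈ Icc 1 (m-1),
      (t * lam + m - 1) / m + ((m - t) * lam + m - 1) / m
        = lam + (if m ∣ t * lam then 0 else 1) := by
    intro t ht
    rw [Finset.mem_Icc] at ht
    apply ceil_pair m lam _ _ (by omega)
    · rw [← Nat.add_mul]
      congr 1
      omega
    · exact Nat.mul_pos (by omega) hl
    · exact Nat.mul_pos (by omega) hl
  rw [Finset.sum_congr rfl h3, Finset.sum_add_distrib, Finset.sum_const, Nat.card_Icc]
  have h4 : ∑ t ∈ Icc 1 (m-1), (if m ∣ t * lam then 0 else 1)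
      = (m - 1) - (Nat.gcd m lam - 1) := by
    have : ∀ t, (if m ∣ t * lam then (0:ℕ) else 1) = (if ¬ m ∣ t * lam then 1 else 0) := by
      intro t; by_cases h : m ∣ t * lam <;> simp [h]
    rw [Finset.sum_congr rfl (fun t _ => this t), Finset.sum_boole]
    have hsplit := Finset.card_filter_add_card_filter_not
      (s := Icc 1 (m-1)) (p := fun t => m ∣ t * lam)
    rw [count_dvd m lam (by omega) hl] at hsplit
    rw [Nat.card_Icc] at hsplit
    simp only [Nat.cast_id]
    omega
  rw [h4]
  have hc : Nat.gcd m lam ≥ 1 := Nat.gcd_pos_of_pos_left lam (by omega)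
  have hcard : m - 1 + 1 - 1 = m - 1 := by omega
  rw [hcard, smul_eq_mul]
  have hx : (m-1) * (lam + 1) = (m-1) * lam + (m-1) := by ring
  omega

lemma floor_sum (m L : ℕ) (hm : 2 ≤ m) (hL : 2 ≤ L) (hco : Nat.gcd m L = 1) :
    2 * (∑ k ∈ Icc 1 (L-1), m * k / L) = (m-1) * (L-1) := by
  have h2 : 2 * (∑ k ∈ Icc 1 (L-1), m * k / L)
      = ∑ k ∈ Icc 1 (L-1), (m * k / L + m * (L - k) / L) := by
    rw [Finset.sum_add_distrib, two_mul]
    congr 1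
    exact sum_reflect L (fun k => m * k / L)
  rw [h2]
  have h3 : ∀ k ∈ Icc 1 (L-1), m * k / L + m * (L - k) / L = m - 1 := by
    intro k hk
    rw [Finset.mem_Icc] at hk
    apply floor_pair m L _ _ (by omega)
    · rw [← Nat.mul_add]
      rw [mul_comm L m]
      congr 1
      omega
    · intro hdvd
      have hco' : Nat.Coprime L m := by
        rw [Nat.coprime_comm] at *
        exact Nat.coprime_comm.mp (by rwa [Nat.gcd_comm] at hco)
      have : L ∣ k := (Nat.Coprime.dvd_of_dvd_mul_left hco' hdvd)
      have := Nat.le_of_dvd (by omega) this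
      omega
  rw [Finset.sum_congr rfl h3, Finset.sum_const, Nat.card_Icc, smul_eq_mul]
  have hcard : L - 1 + 1 - 1 = L - 1 := by omega
  rw [hcard, Nat.mul_comm]

section main

variable (m r : ℕ) (lam : ℕ → ℕ) (hm : 2 ≤ m) (hr : 2 ≤ r)
  (hlam : ∀ i, i < r → 1 ≤ lam i ∧ lam i < m) (lam0 : ℕ)
  (h0 : lam0 = ∑ i ∈ Finset.range r, lam i) (hco : Nat.gcd m lam0 = 1) (hrl : r < lam0)

include hm hr hlam h0

lemma etaSet_bdd {k : ℕ} (hk2 : k ≤ lam0 - 1) :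
    ∀ v ∈ {v : ℕ | ∃ s : ℕ → ℕ, (∀ i, i < r → 1 ≤ s i ∧ s i ≤ lam i) ∧
      (∑ i ∈ Finset.range r, s i) = k ∧ v = kinf m r lam s}, v ≤ m - 1 := by
  rintro v ⟨s, hs, hsum, rfl⟩
  have hlam0pos : 1 ≤ lam0 := by
    rw [h0]; calc 1 ≤ lam 0 := (hlam 0 (by omega)).1
      _ ≤ ∑ i ∈ range r, lam i := Finset.single_le_sum (f := lam) (fun i _ => Nat.zero_le _) (Finset.mem_range.mpr (by omega))
  have hksum : ∑ i ∈ range r, s i < ∑ i ∈ range r, lam i := by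
    rw [hsum, ← h0]; omega
  obtain ⟨i, hi, hsi⟩ := Finset.exists_lt_of_sum_lt hksum
  have hi' := Finset.mem_range.mp hi
  have hlami : 0 < lam i := (hlam i hi').1
  have : s i * m / lam i ≤ m - 1 := by
    have : s i * m / lam i < m := by
      rw [Nat.div_lt_iff_lt_mul hlami, mul_comm m (lam i)]
      exact (Nat.mul_lt_mul_right (by omega : 0 < m)).mpr hsi
    omega
  calc kinf m r lam s ≤ s i * m / lam i := Nat.sInf_le ⟨i, hi', rfl⟩
    _ ≤ m - 1 := this

lemma etaSet_nonempty {k : ℕ} (hk1 : r ≤ k) (hk2 : k ≤ lam0 - 1) :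
    Set.Nonempty {v : ℕ | ∃ s : ℕ → ℕ, (∀ i, i < r → 1 ≤ s i ∧ s i ≤ lam i) ∧
      (∑ i ∈ Finset.range r, s i) = k ∧ v = kinf m r lam s} := by
  obtain ⟨s, hs, hsum⟩ := exists_tuple r (fun _ => 1) lam (fun i hi => (hlam i hi).1) k
    (by simpa using hk1) (by rw [← h0]; omega)
  exact ⟨kinf m r lam s, s, fun i hi => hs i hi, hsum, rfl⟩

lemma ceil_le_iff {a s : ℕ} : (a + m - 1) / m ≤ s ↔ a ≤ m * s := by
  rw [Nat.div_le_iff_le_mul_add_pred (by omega)]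
  omega

lemma le_eta_of (t k : ℕ) (ht1 : 1 ≤ t) (ht2 : t ≤ m - 1) (hk1 : r ≤ k) (hk2 : k ≤ lam0 - 1)
    (hN : NN m r lam t ≤ k) : t ≤ eta m r lam k := by
  have hglam : ∀ i, i < r → (t * lam i + m - 1) / m ≤ lam i := by
    intro i hi
    rw [ceil_le_iff m r lam hm hr hlam lam0 h0]
    exact Nat.mul_le_mul_right _ (by omega)
  obtain ⟨s, hs, hsum⟩ := exists_tuple r (fun i => (t * lam i + m - 1) / m) lam hglam k hN
    (by rw [← h0]; omega)
  have hts : t ≤ kinf m r lam s := by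
    have hne : {w : ℕ | ∃ i, i < r ∧ w = s i * m / lam i}.Nonempty :=
      ⟨s 0 * m / lam 0, 0, by omega, rfl⟩
    unfold kinf
    apply le_csInf hne
    rintro w ⟨i, hi, rfl⟩
    rw [Nat.le_div_iff_mul_le (hlam i hi).1]
    have := (hs i hi).1
    rw [ceil_le_iff m r lam hm hr hlam lam0 h0] at this
    calc t * lam i = lam i * t := mul_comm _ _
      _ ≤ m * s i := by
          calc lam i * t = t * lam i := mul_comm _ _
            _ ≤ m * s i := this
      _ = s i * m := mul_comm _ _
  have hmem : ∀ i, i < r → 1 ≤ s i ∧ s i ≤ lam i := by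
    intro i hi
    have h1le : 1 ≤ (t * lam i + m - 1) / m := by
      rw [Nat.le_div_iff_mul_le (by omega : 0 < m)]
      have := Nat.mul_le_mul ht1 (hlam i hi).1
      omega
    exact ⟨le_trans h1le (hs i hi).1, (hs i hi).2⟩
  refine le_trans hts (le_csSup ?_ ⟨s, hmem, hsum, rfl⟩)
  exact ⟨m - 1, fun v hv => etaSet_bdd m r lam hm hr hlam lam0 h0 hk2 v hv⟩

lemma eta_le_m1 {k : ℕ} (hk1 : r ≤ k) (hk2 : k ≤ lam0 - 1) : eta m r lam k ≤ m - 1 :=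
  csSup_le (etaSet_nonempty m r lam hm hr hlam lam0 h0 hk1 hk2)
    (etaSet_bdd m r lam hm hr hlam lam0 h0 hk2)

lemma eta_mem {k : ℕ} (hk1 : r ≤ k) (hk2 : k ≤ lam0 - 1) :
    ∃ s : ℕ → ℕ, (∀ i, i < r → 1 ≤ s i ∧ s i ≤ lam i) ∧
      (∑ i ∈ Finset.range r, s i) = k ∧ eta m r lam k = kinf m r lam s :=
  Nat.sSup_mem (etaSet_nonempty m r lam hm hr hlam lam0 h0 hk1 hk2)
    ⟨m - 1, fun v hv => etaSet_bdd m r lam hm hr hlam lam0 h0 hk2 v hv⟩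

lemma NN_le_of_le_eta {k t : ℕ} (hk1 : r ≤ k) (hk2 : k ≤ lam0 - 1) (ht : t ≤ eta m r lam k) :
    NN m r lam t ≤ k := by
  obtain ⟨s, hs, hsum, heq⟩ := eta_mem m r lam hm hr hlam lam0 h0 hk1 hk2
  have hle : ∀ i, i < r → (t * lam i + m - 1) / m ≤ s i := by
    intro i hi
    rw [ceil_le_iff m r lam hm hr hlam lam0 h0]
    have h1 : t ≤ s i * m / lam i := by
      refine le_trans ht ?_
      rw [heq]
      exact Nat.sInf_le ⟨i, hi, rfl⟩
    rw [Nat.le_div_iff_mul_le (hlam i hi).1] at h1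
    calc t * lam i ≤ s i * m := h1
      _ = m * s i := mul_comm _ _
  calc NN m r lam t ≤ ∑ i ∈ range r, s i :=
        Finset.sum_le_sum (fun i hi => hle i (Finset.mem_range.mp hi))
    _ = k := hsum

lemma eta_le_div {k : ℕ} (hk1 : r ≤ k) (hk2 : k ≤ lam0 - 1) :
    eta m r lam k ≤ m * k / lam0 := by
  obtain ⟨s, hs, hsum, heq⟩ := eta_mem m r lam hm hr hlam lam0 h0 hk1 hk2
  have hlam0pos : 0 < lam0 := by omega
  rw [Nat.le_div_iff_mul_le hlam0pos, h0, Finset.mul_sum]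
  calc ∑ i ∈ range r, eta m r lam k * lam i
      ≤ ∑ i ∈ range r, s i * m := by
        apply Finset.sum_le_sum
        intro i hi
        have hi' := Finset.mem_range.mp hi
        have h1 : eta m r lam k ≤ s i * m / lam i := by
          rw [heq]; exact Nat.sInf_le ⟨i, hi', rfl⟩
        rw [Nat.le_div_iff_mul_le (hlam i hi').1] at h1
        exact h1
    _ = (∑ i ∈ range r, s i) * m := by rw [Finset.sum_mul]
    _ = k * m := by rw [hsum]
    _ = m * k := mul_comm _ _

lemma eta_eq_card {k : ℕ} (hk1 : r ≤ k) (hk2 : k ≤ lam0 - 1) :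
    eta m r lam k = ((Icc 1 (m-1)).filter (fun t => NN m r lam t ≤ k)).card := by
  have hfilter : (Icc 1 (m-1)).filter (fun t => NN m r lam t ≤ k) = Icc 1 (eta m r lam k) := by
    ext t
    simp only [Finset.mem_filter, Finset.mem_Icc]
    constructor
    · rintro ⟨⟨h1, h2⟩, h3⟩
      exact ⟨h1, le_eta_of m r lam hm hr hlam lam0 h0 t k h1 h2 hk1 hk2 h3⟩
    · rintro ⟨h1, h2⟩
      refine ⟨⟨h1, le_trans h2 (eta_le_m1 m r lam hm hr hlam lam0 h0 hk1 hk2)⟩, ?_⟩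
      exact NN_le_of_le_eta m r lam hm hr hlam lam0 h0 hk1 hk2 h2
  rw [hfilter, Nat.card_Icc]
  omega

include hco hrl

lemma hcopZ : IsCoprime ((lam0 : ℤ)) ((m : ℤ)) := by
  rw [Int.isCoprime_iff_gcd_eq_one, Int.gcd_natCast_natCast, Nat.gcd_comm]
  exact hco

lemma unique_k {k1 k2 : ℕ} (hk1 : k1 ≤ lam0 - 1) (hk2 : k2 ≤ lam0 - 1) {c1 c2 : ℤ}
    (h : (m:ℤ)*k1 - c1*lam0 = (m:ℤ)*k2 - c2*lam0) : k1 = k2 ∧ c1 = c2 := by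
  have hdvd : (lam0:ℤ) ∣ (m:ℤ) * ((k1:ℤ) - k2) := ⟨c1 - c2, by linear_combination h⟩
  have hdvd2 : (lam0:ℤ) ∣ ((k1:ℤ) - k2) :=
    (hcopZ m r lam hm hr hlam lam0 h0 hco hrl).dvd_of_dvd_mul_left hdvd
  have h3 : lam0 ∣ ((k1:ℤ) - (k2:ℤ)).natAbs := Int.natCast_dvd.mp hdvd2
  have h4 : ((k1:ℤ) - (k2:ℤ)).natAbs < lam0 := by omega
  have h5 := Nat.eq_zero_of_dvd_of_lt h3 h4
  have h6 : k1 = k2 := by omega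
  refine ⟨h6, ?_⟩
  subst h6
  have h7 : c1 * lam0 = c2 * lam0 := by linarith
  have hl0 : ((lam0:ℤ)) ≠ 0 := Int.natCast_ne_zero.mpr (by omega)
  exact mul_right_cancel₀ hl0 h7

lemma not_in_sg {k : ℕ} {c : ℤ} (hk1 : 1 ≤ k) (hk2 : k ≤ lam0 - 1) (hc : 1 ≤ c)
    (a b : ℕ) : ((a:ℤ) * m + b * lam0 ≠ (m:ℤ)*k - c*lam0) := by
  intro h
  have hexp : (m:ℤ) * ((k:ℤ) - a) = lam0 * ((b:ℤ) + c) := by linear_combination -h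
  have hdvd : (lam0:ℤ) ∣ (m:ℤ) * ((k:ℤ) - a) := ⟨(b:ℤ) + c, hexp⟩
  have hdvd2 : (lam0:ℤ) ∣ ((k:ℤ) - a) :=
    (hcopZ m r lam hm hr hlam lam0 h0 hco hrl).dvd_of_dvd_mul_left hdvd
  have hl1 : (lam0:ℤ) ≤ lam0 * ((b:ℤ) + c) := by
    have hb : (0:ℤ) ≤ (b:ℤ) := Int.natCast_nonneg b
    have h1 : (1:ℤ) ≤ (b:ℤ) + c := by omega
    nlinarith [Int.natCast_nonneg lam0]
  have hpos : 0 < (k:ℤ) - a := by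
    by_contra hne
    push_neg at hne
    have : (m:ℤ) * ((k:ℤ) - a) ≤ 0 :=
      mul_nonpos_of_nonneg_of_nonpos (by positivity) hne
    omega
  have := Int.le_of_dvd hpos hdvd2
  omega

lemma etaP_le_div {k : ℕ} (hk1 : 1 ≤ k) (hk2 : k ≤ lam0 - 1) :
    etaP m r lam k ≤ m * k / lam0 := by
  unfold etaP
  split
  · exact Nat.zero_le _
  · exact eta_le_div m r lam hm hr hlam lam0 h0 (by omega) hk2

lemma mem_gapF_iff {x : ℕ} :
    x ∈ gapF m r lam0 lam ↔
      ¬((∃ a b : ℕ, (x : ℤ) = a * m + b * lam0) ∨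
        ∃ k : ℕ, r ≤ k ∧ k ≤ lam0 - 1 ∧ ∃ k' : ℕ, 1 ≤ k' ∧ k' ≤ eta m r lam k ∧
          (x : ℤ) = (m : ℤ) * k - (k' : ℤ) * lam0) := by
  have hl0pos : (0:ℤ) < lam0 := by exact_mod_cast (by omega : 0 < lam0)
  unfold gapF
  rw [Finset.mem_image]
  constructor
  · rintro ⟨p, hmem, heq⟩
    obtain ⟨k, k'⟩ := p
    rw [Finset.mem_sigma, Finset.mem_Icc, Finset.mem_Icc] at hmem
    dsimp only at hmem heq
    obtain ⟨⟨hK1, hK2⟩, hK3, hK4⟩ := hmem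
    have hmul : k' * lam0 ≤ m * k := by
      rw [← Nat.le_div_iff_mul_le (by omega : 0 < lam0)]
      exact hK4
    have hxz : (x:ℤ) = (m:ℤ) * k - (k':ℤ) * lam0 := by
      rw [← heq]
      rw [Nat.cast_sub hmul]
      push_cast
      ring
    rintro (⟨a, b, hab⟩ | ⟨k2, hk2r, hk2L, k2', h1, h2, heq2⟩)
    · have hc1 : (1:ℤ) ≤ (k':ℤ) := by exact_mod_cast (by omega : 1 ≤ k')
      exact not_in_sg m r lam hm hr hlam lam0 h0 hco hrl hK1 hK2 hc1 a b
        (by rw [← hab, hxz])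
    · have := unique_k m r lam hm hr hlam lam0 h0 hco hrl hK2 hk2L
        (c1 := (k':ℤ)) (c2 := (k2':ℤ)) (by rw [← hxz, heq2])
      obtain ⟨hkk, hcc⟩ := this
      have hk2'eq : k' = k2' := by exact_mod_cast hcc
      have hetaP : etaP m r lam k = eta m r lam k := by
        unfold etaP; rw [if_neg (by omega)]
      subst hkk
      omega
  · intro hx
    obtain ⟨u, v, huv⟩ := hcopZ m r lam hm hr hlam lam0 h0 hco hrl
    set K : ℤ := ((x:ℤ) * v) % lam0 with hK
    have hK0 : 0 ≤ K := Int.emod_nonneg _ (by omega)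
    have hKlt : K < lam0 := Int.emod_lt_of_pos _ hl0pos
    have hdvd1 : (lam0:ℤ) ∣ ((x:ℤ) * v - K) := Int.dvd_self_sub_of_emod_eq hK.symm
    obtain ⟨w, hw⟩ := hdvd1
    have hdvd : (lam0:ℤ) ∣ ((m:ℤ) * K - x) :=
      ⟨-(x:ℤ) * u - m * w, by linear_combination (-(m:ℤ)) * hw + (x:ℤ) * huv⟩
    obtain ⟨c, hc⟩ := hdvd
    have hxz : (x:ℤ) = (m:ℤ) * K - c * lam0 := by linear_combination -hc
    have hxnn : (0:ℤ) ≤ (x:ℤ) := Int.natCast_nonneg x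
    have hK1 : 1 ≤ K := by
      rcases eq_or_lt_of_le hK0 with h | h
      · exfalso
        apply hx; left
        have hxc : (x:ℤ) = -c * lam0 := by rw [hxz, ← h]; ring
        have hcle : c ≤ 0 := by nlinarith
        refine ⟨0, (-c).toNat, ?_⟩
        push_cast [Int.toNat_of_nonneg (by omega : (0:ℤ) ≤ -c)]
        rw [hxc]; ring
      · omega
    have hcpos : 1 ≤ c := by
      by_contra hcle
      push_neg at hcle
      apply hx; left
      refine ⟨K.toNat, (-c).toNat, ?_⟩
      push_cast [Int.toNat_of_nonneg hK0, Int.toNat_of_nonneg (by omega : (0:ℤ) ≤ -c)]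
      linear_combination hxz
    have hKnZ : ((K.toNat : ℤ)) = K := Int.toNat_of_nonneg hK0
    have hcnZ : ((c.toNat : ℤ)) = c := Int.toNat_of_nonneg (by omega)
    have hKn1 : 1 ≤ K.toNat := by omega
    have hKn2 : K.toNat ≤ lam0 - 1 := by omega
    have hcn1 : 1 ≤ c.toNat := by omega
    have hmulZ : ((c.toNat : ℤ)) * lam0 ≤ (m:ℤ) * K.toNat := by
      rw [hKnZ, hcnZ]; linarith [hxz, hxnn]
    have hmuln : c.toNat * lam0 ≤ m * K.toNat := by exact_mod_cast hmulZ
    have hdivn : c.toNat ≤ m * K.toNat / lam0 :=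
      (Nat.le_div_iff_mul_le (by omega : 0 < lam0)).mpr hmuln
    have hxzn : (x:ℤ) = (m:ℤ) * K.toNat - (c.toNat:ℤ) * lam0 := by
      rw [hKnZ, hcnZ]; exact hxz
    have hgt : etaP m r lam K.toNat + 1 ≤ c.toNat := by
      by_contra hle
      push_neg at hle
      have hP : 1 ≤ etaP m r lam K.toNat := by omega
      have hKr : r ≤ K.toNat := by
        by_contra hKr'
        push_neg at hKr'
        unfold etaP at hP
        rw [if_pos hKr'] at hP
        omega
      have hEta : etaP m r lam K.toNat = eta m r lam K.toNat := by
        unfold etaP; rw [if_neg (by omega)]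
      apply hx; right
      exact ⟨K.toNat, hKr, hKn2, c.toNat, hcn1, by omega, hxzn⟩
    refine ⟨⟨K.toNat, c.toNat⟩, ?_, ?_⟩
    · rw [Finset.mem_sigma, Finset.mem_Icc, Finset.mem_Icc]
      exact ⟨⟨hKn1, hKn2⟩, hgt, hdivn⟩
    · have h2 : ((m * K.toNat - c.toNat * lam0 : ℕ) : ℤ) = (x:ℤ) := by
        rw [Nat.cast_sub hmuln]
        push_cast
        linear_combination -hxzn
      exact_mod_cast h2

lemma NN_bounds (t : ℕ) (ht1 : 1 ≤ t) (ht2 : t ≤ m - 1) :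
    r ≤ NN m r lam t ∧ NN m r lam t ≤ lam0 := by
  constructor
  · have h1 : ∀ i ∈ range r, 1 ≤ (t * lam i + m - 1) / m := by
      intro i hi
      rw [Nat.le_div_iff_mul_le (by omega : 0 < m)]
      have := Nat.mul_le_mul ht1 (hlam i (Finset.mem_range.mp hi)).1
      omega
    calc r = ∑ _i ∈ range r, 1 := by simp
      _ ≤ NN m r lam t := Finset.sum_le_sum h1
  · rw [h0]
    apply Finset.sum_le_sum
    intro i hi
    rw [ceil_le_iff m r lam hm hr hlam lam0 h0]
    exact Nat.mul_le_mul_right _ (by omega)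

lemma eta_sum_eq :
    ∑ k ∈ Icc r (lam0-1), eta m r lam k
      = ∑ t ∈ Icc 1 (m-1), (lam0 - NN m r lam t) := by
  have step1 : ∀ k ∈ Icc r (lam0-1), eta m r lam k
      = ∑ t ∈ Icc 1 (m-1), if NN m r lam t ≤ k then 1 else 0 := by
    intro k hk
    rw [Finset.mem_Icc] at hk
    rw [eta_eq_card m r lam hm hr hlam lam0 h0 hk.1 hk.2, Finset.card_filter]
  rw [Finset.sum_congr rfl step1, Finset.sum_comm]
  apply Finset.sum_congr rfl
  intro t ht
  rw [Finset.mem_Icc] at ht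
  obtain ⟨hNr, hNl⟩ := NN_bounds m r lam hm hr hlam lam0 h0 hco hrl t ht.1 ht.2
  rw [← Finset.card_filter]
  have hfe : (Icc r (lam0-1)).filter (fun k => NN m r lam t ≤ k)
      = Icc (NN m r lam t) (lam0-1) := by
    ext k
    simp only [Finset.mem_filter, Finset.mem_Icc]
    omega
  rw [hfe, Nat.card_Icc]
  omega

lemma card_gapF : 2 * (((gapF m r lam0 lam).card : ℕ) : ℤ)
    = ((m:ℤ) - 1) * ((r:ℤ) - 1) + (r:ℤ) - ∑ i ∈ range r, (Nat.gcd m (lam i) : ℤ) := by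
  have hl1 : 1 ≤ lam0 := by omega
  -- injectivity of the representation map
  have hinj : Set.InjOn (fun p : (_ : ℕ) × ℕ => m * p.1 - p.2 * lam0)
      ↑((Finset.Icc 1 (lam0-1)).sigma
        (fun k => Finset.Icc (etaP m r lam k + 1) (m*k/lam0))) := by
    rintro ⟨k1, c1⟩ hp ⟨k2, c2⟩ hq hpq
    rw [Finset.mem_coe, Finset.mem_sigma, Finset.mem_Icc, Finset.mem_Icc] at hp hq
    dsimp only at hp hq hpq
    obtain ⟨⟨hp1, hp2⟩, _, hp4⟩ := hp
    obtain ⟨⟨hq1, hq2⟩, _, hq4⟩ := hq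
    have hmul1 : c1 * lam0 ≤ m * k1 := by
      rw [← Nat.le_div_iff_mul_le (by omega : 0 < lam0)]; exact hp4
    have hmul2 : c2 * lam0 ≤ m * k2 := by
      rw [← Nat.le_div_iff_mul_le (by omega : 0 < lam0)]; exact hq4
    have hz : (m:ℤ) * k1 - (c1:ℤ) * lam0 = (m:ℤ) * k2 - (c2:ℤ) * lam0 := by
      have := congrArg (fun n : ℕ => (n : ℤ)) hpq
      rw [Nat.cast_sub hmul1, Nat.cast_sub hmul2] at this
      push_cast at this
      linarith
    obtain ⟨hk, hc⟩ := unique_k m r lam hm hr hlam lam0 h0 hco hrl hp2 hq2 hz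
    have : c1 = c2 := by exact_mod_cast hc
    subst hk this
    rfl
  have hcard : (gapF m r lam0 lam).card
      = ∑ k ∈ Icc 1 (lam0-1), (m*k/lam0 + 1 - (etaP m r lam k + 1)) := by
    unfold gapF
    rw [Finset.card_image_of_injOn hinj, Finset.card_sigma]
    exact Finset.sum_congr rfl (fun k hk => by rw [Nat.card_Icc])
  -- cast to ℤ
  have hetaPle : ∀ k ∈ Icc 1 (lam0-1), etaP m r lam k + 1 ≤ m*k/lam0 + 1 := by
    intro k hk
    rw [Finset.mem_Icc] at hk
    have := etaP_le_div m r lam hm hr hlam lam0 h0 hco hrl hk.1 hk.2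
    omega
  have f1 : ((gapF m r lam0 lam).card : ℤ)
      = ∑ k ∈ Icc 1 (lam0-1), (((m*k/lam0 : ℕ) : ℤ) - ((etaP m r lam k : ℕ) : ℤ)) := by
    rw [hcard, Nat.cast_sum]
    apply Finset.sum_congr rfl
    intro k hk
    rw [Nat.cast_sub (hetaPle k hk)]
    push_cast
    ring
  -- split off etaP sum
  have f2 : ∑ k ∈ Icc 1 (lam0-1), ((etaP m r lam k : ℕ) : ℤ)
      = ∑ k ∈ Icc r (lam0-1), ((eta m r lam k : ℕ) : ℤ) := by
    have hsub : Icc r (lam0-1) ⊆ Icc 1 (lam0-1) := by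
      intro k hk
      rw [Finset.mem_Icc] at hk
      exact Finset.mem_Icc.mpr ⟨by omega, hk.2⟩
    have hzero : ∀ k ∈ Icc 1 (lam0-1), k ∉ Icc r (lam0-1) → ((etaP m r lam k : ℕ) : ℤ) = 0 := by
      intro k hk1 hk2
      rw [Finset.mem_Icc] at hk1
      rw [Finset.mem_Icc] at hk2
      unfold etaP
      rw [if_pos (by omega)]
      simp
    rw [← Finset.sum_subset hsub hzero]
    apply Finset.sum_congr rfl
    intro k hk
    rw [Finset.mem_Icc] at hk
    unfold etaP
    rw [if_neg (by omega)]
  -- floor sum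
  have f3 : 2 * ∑ k ∈ Icc 1 (lam0-1), ((m*k/lam0 : ℕ) : ℤ)
      = ((m:ℤ) - 1) * ((lam0:ℤ) - 1) := by
    have h := floor_sum m lam0 hm (by omega) hco
    have h2 : (2:ℤ) * ∑ k ∈ Icc 1 (lam0-1), ((m*k/lam0 : ℕ) : ℤ)
        = (((m-1)*(lam0-1) : ℕ) : ℤ) := by exact_mod_cast h
    rw [h2, Nat.cast_mul, Nat.cast_sub (by omega : 1 ≤ m), Nat.cast_sub hl1]
    push_cast
    ring
  -- eta sum to NN sums
  have f4 : ∑ k ∈ Icc r (lam0-1), ((eta m r lam k : ℕ) : ℤ)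
      = ∑ t ∈ Icc 1 (m-1), (((lam0:ℕ) : ℤ) - ((NN m r lam t : ℕ) : ℤ)) := by
    have h := eta_sum_eq m r lam hm hr hlam lam0 h0 hco hrl
    have h2 : ∑ k ∈ Icc r (lam0-1), ((eta m r lam k : ℕ) : ℤ)
        = ∑ t ∈ Icc 1 (m-1), (((lam0 - NN m r lam t : ℕ)) : ℤ) := by exact_mod_cast h
    rw [h2]
    apply Finset.sum_congr rfl
    intro t ht
    rw [Finset.mem_Icc] at ht
    exact Nat.cast_sub (NN_bounds m r lam hm hr hlam lam0 h0 hco hrl t ht.1 ht.2).2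
  -- NN sum splits into the C_i's
  have f5 : ∑ t ∈ Icc 1 (m-1), ((NN m r lam t : ℕ) : ℤ)
      = ∑ i ∈ range r, ∑ t ∈ Icc 1 (m-1), (((t * lam i + m - 1) / m : ℕ) : ℤ) := by
    rw [Finset.sum_congr rfl (fun t _ => by
      unfold NN
      exact Nat.cast_sum _ _), Finset.sum_comm]
  -- each C_i
  have f6 : ∀ i ∈ range r, 2 * ∑ t ∈ Icc 1 (m-1), (((t * lam i + m - 1) / m : ℕ) : ℤ)
      = ((m:ℤ) - 1) * ((lam i : ℤ) + 1) - (Nat.gcd m (lam i) : ℤ) + 1 := by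
    intro i hi
    have hli := (hlam i (Finset.mem_range.mp hi)).1
    have h := ceil_sum m (lam i) hm hli
    have hg1 : 1 ≤ Nat.gcd m (lam i) := Nat.gcd_pos_of_pos_left (lam i) (by omega)
    have h2 : (2:ℤ) * ∑ t ∈ Icc 1 (m-1), (((t * lam i + m - 1) / m : ℕ) : ℤ)
        + ((Nat.gcd m (lam i) - 1 : ℕ) : ℤ) = (((m-1) * (lam i + 1) : ℕ) : ℤ) := by
      exact_mod_cast h
    rw [Nat.cast_sub hg1, Nat.cast_mul, Nat.cast_sub (show 1 ≤ m by omega)] at h2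
    push_cast at h2 ⊢
    linarith
  have f7 : ((lam0:ℕ):ℤ) = ∑ i ∈ range r, ((lam i : ℕ) : ℤ) := by exact_mod_cast h0
  have e1 : 2 * (((gapF m r lam0 lam).card : ℕ) : ℤ)
      = ((m:ℤ)-1)*((lam0:ℤ)-1) - 2 * ∑ k ∈ Icc r (lam0-1), ((eta m r lam k : ℕ) : ℤ) := by
    rw [f1, Finset.sum_sub_distrib, f2]
    linarith [f3]
  have e2 : ∑ t ∈ Icc 1 (m-1), (((lam0:ℕ):ℤ) - ((NN m r lam t : ℕ) : ℤ))
      = ((m:ℤ)-1) * (lam0:ℤ)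
        - ∑ i ∈ range r, ∑ t ∈ Icc 1 (m-1), (((t * lam i + m - 1) / m : ℕ) : ℤ) := by
    rw [Finset.sum_sub_distrib, Finset.sum_const, Nat.card_Icc, f5, nsmul_eq_mul,
      show m - 1 + 1 - 1 = m - 1 from by omega, Nat.cast_sub (by omega : 1 ≤ m)]
    push_cast
    ring
  have e3 : 2 * ∑ i ∈ range r, ∑ t ∈ Icc 1 (m-1), (((t * lam i + m - 1) / m : ℕ) : ℤ)
      = ((m:ℤ)-1)*((lam0:ℤ) + (r:ℤ)) - (∑ i ∈ range r, (Nat.gcd m (lam i) : ℤ)) + (r:ℤ) := by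
    rw [Finset.mul_sum, Finset.sum_congr rfl f6]
    have expand : ∑ i ∈ range r, (((m:ℤ) - 1) * ((lam i : ℤ) + 1) - (Nat.gcd m (lam i) : ℤ) + 1)
        = ((m:ℤ)-1) * (∑ i ∈ range r, ((lam i:ℤ) + 1))
          - (∑ i ∈ range r, (Nat.gcd m (lam i) : ℤ)) + (r:ℤ) := by
      rw [Finset.sum_add_distrib, Finset.sum_sub_distrib, Finset.mul_sum, Finset.sum_const,
        Finset.card_range, nsmul_eq_mul]
      ring
    rw [expand, Finset.sum_add_distrib, Finset.sum_const, Finset.card_range, nsmul_eq_mul,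
      ← f7]
    ring
  rw [e1, f4, e2]
  linear_combination e3

end main

/-- The union ⟨m,λ₀⟩ ∪ ⋃_{k=r}^{λ₀-1} B_k is disjoint, and the cardinality of its
complement in ℕ₀ is ((m-1)(r-1) + r - ∑ gcd(m,λ_i))/2. -/
theorem stmt18 (m r : ℕ) (lam : ℕ → ℕ) (hm : 2 ≤ m) (hr : 2 ≤ r)
    (hlam : ∀ i, i < r → 1 ≤ lam i ∧ lam i < m) (lam0 : ℕ)
    (h0 : lam0 = ∑ i ∈ Finset.range r, lam i) (hco : Nat.gcd m lam0 = 1) (hrl : r < lam0) :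
    (∀ k : ℕ, r ≤ k → k ≤ lam0 - 1 →
        Disjoint {y : ℤ | ∃ a b : ℕ, y = a * m + b * lam0}
          {y : ℤ | ∃ k' : ℕ, 1 ≤ k' ∧ k' ≤ eta m r lam k ∧
            y = (m : ℤ) * k - (k' : ℤ) * lam0}) ∧
      (∀ k1 k2 : ℕ, r ≤ k1 → k1 ≤ lam0 - 1 → r ≤ k2 → k2 ≤ lam0 - 1 → k1 ≠ k2 →
        Disjoint {y : ℤ | ∃ k' : ℕ, 1 ≤ k' ∧ k' ≤ eta m r lam k1 ∧
            y = (m : ℤ) * k1 - (k' : ℤ) * lam0}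
          {y : ℤ | ∃ k' : ℕ, 1 ≤ k' ∧ k' ≤ eta m r lam k2 ∧
            y = (m : ℤ) * k2 - (k' : ℤ) * lam0}) ∧
      (2 * Set.ncard {x : ℕ | ¬((∃ a b : ℕ, (x : ℤ) = a * m + b * lam0) ∨
          ∃ k : ℕ, r ≤ k ∧ k ≤ lam0 - 1 ∧ ∃ k' : ℕ, 1 ≤ k' ∧ k' ≤ eta m r lam k ∧
            (x : ℤ) = (m : ℤ) * k - (k' : ℤ) * lam0)} : ℤ) =
        ((m : ℤ) - 1) * ((r : ℤ) - 1) + r - ∑ i ∈ Finset.range r, (Nat.gcd m (lam i) : ℤ) := by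
  refine ⟨?_, ?_, ?_⟩
  · intro k hk1 hk2
    rw [Set.disjoint_left]
    rintro y ⟨a, b, rfl⟩ ⟨k', h1, h2, heq⟩
    exact not_in_sg m r lam hm hr hlam lam0 h0 hco hrl (by omega) hk2
      (by exact_mod_cast h1) a b heq
  · intro k1 k2 hk11 hk12 hk21 hk22 hne
    rw [Set.disjoint_left]
    rintro y ⟨k1', h11, h12, rfl⟩ ⟨k2', h21, h22, heq⟩
    exact hne (unique_k m r lam hm hr hlam lam0 h0 hco hrl hk12 hk22
      (c1 := (k1':ℤ)) (c2 := (k2':ℤ)) heq).1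
  · have hset : {x : ℕ | ¬((∃ a b : ℕ, (x : ℤ) = a * m + b * lam0) ∨
          ∃ k : ℕ, r ≤ k ∧ k ≤ lam0 - 1 ∧ ∃ k' : ℕ, 1 ≤ k' ∧ k' ≤ eta m r lam k ∧
            (x : ℤ) = (m : ℤ) * k - (k' : ℤ) * lam0)} = ↑(gapF m r lam0 lam) := by
      ext x
      simp only [Set.mem_setOf_eq, Finset.mem_coe]
      exact (mem_gapF_iff m r lam hm hr hlam lam0 h0 hco hrl).symm
    rw [hset, Set.ncard_coe_finset]
    exact card_gapF m r lam hm hr hlam lam0 h0 hco hrl
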